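/- For m, j ∈ ℕ, ⟨e_m² e_j, e_j⟩ in L²([0,π], sin²(x)(2/π)dx) equals ω_{min(j,m)} = min(j,m) + 1. -/

import Mathlib

open Real intervalIntegral Finset

/-- `∫₀^π cos(k x) dx = 0` for a nonzero integer `k`. -/
lemma aux_integral_cos_int (k : ℤ) (hk : k ≠ 0) :
    ∫ x in (0:ℝ)..Real.pi, Real.cos ((k:ℝ) * x) = 0 := by
  have hk' : (k:ℝ) ≠ 0 := Int.cast_ne_zero.mpr hk
  rw [intervalIntegral.integral_comp_mul_left (a := (0:ℝ)) (b := Real.pi)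
    (f := Real.cos) hk']
  simp [Real.sin_int_mul_pi]

/-- Orthogonality of the sines `sin((a+1)x)` on `[0, π]`. -/
lemma aux_sin_orth (a b : ℕ) :
    ∫ x in (0:ℝ)..Real.pi, Real.sin (((a:ℝ)+1) * x) * Real.sin (((b:ℝ)+1) * x)
      = if a = b then Real.pi / 2 else 0 := by
  have key : ∀ x : ℝ, Real.sin (((a:ℝ)+1) * x) * Real.sin (((b:ℝ)+1) * x)
      = (Real.cos ((((a:ℤ):ℝ) - (b:ℤ)) * x) - Real.cos ((((a:ℤ):ℝ) + (b:ℤ) + 2) * x)) / 2 := by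
    intro x
    have := Real.two_mul_sin_mul_sin (((a:ℝ)+1)*x) (((b:ℝ)+1)*x)
    push_cast
    ring_nf
    ring_nf at this
    linarith
  simp_rw [key]
  rw [intervalIntegral.integral_div]
  rw [intervalIntegral.integral_sub (by apply Continuous.intervalIntegrable; fun_prop)
    (by apply Continuous.intervalIntegrable; fun_prop)]
  have h2 : ∫ x in (0:ℝ)..Real.pi, Real.cos ((((a:ℤ):ℝ) + (b:ℤ) + 2) * x) = 0 := by
    have : (((a:ℤ):ℝ) + (b:ℤ) + 2) = (((a:ℤ) + b + 2 : ℤ) : ℝ) := by push_cast; ring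
    rw [this]
    exact aux_integral_cos_int _ (by omega)
  rw [h2]
  by_cases hab : a = b
  · subst hab
    simp
  · have : ∫ x in (0:ℝ)..Real.pi, Real.cos ((((a:ℤ):ℝ) - (b:ℤ)) * x) = 0 := by
      have : (((a:ℤ):ℝ) - (b:ℤ)) = (((a:ℤ) - b : ℤ) : ℝ) := by push_cast; ring
      rw [this]
      exact aux_integral_cos_int _ (by omega)
    rw [this, if_neg hab]
    norm_num

/-- Telescoping product formula. -/
lemma aux_tele (d n : ℕ) (x : ℝ) :
    Real.sin x * ∑ ℓ ∈ Finset.range (n+1), Real.sin ((((d + 2*ℓ : ℕ) : ℝ) + 1) * x)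
      = (Real.cos ((d:ℝ)*x) - Real.cos (((d:ℝ)+2*n+2)*x))/2 := by
  induction n with
  | zero =>
      rw [Finset.sum_range_one]
      have := Real.two_mul_sin_mul_sin (((d:ℝ)+1)*x) x
      push_cast
      ring_nf at this ⊢
      linarith
  | succ n ih =>
      rw [Finset.sum_range_succ, mul_add, ih]
      have := Real.two_mul_sin_mul_sin (((d:ℝ) + 2*(n+1) + 1)*x) x
      push_cast at this ⊢
      ring_nf at this ⊢
      linarith

/-- Product-to-sum rule for the eigenfunctions (numerator form). -/
lemma aux_prod_eq (m j : ℕ) (hjm : j ≤ m) (x : ℝ) :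
    Real.sin (((m:ℝ)+1)*x) * Real.sin (((j:ℝ)+1)*x)
      = Real.sin x * ∑ ℓ ∈ Finset.range (j+1),
          Real.sin ((((m - j + 2*ℓ : ℕ) : ℝ) + 1) * x) := by
  rw [aux_tele (m-j) j x]
  have hd : ((m - j : ℕ):ℝ) = (m:ℝ) - j := by
    rw [Nat.cast_sub hjm]
  rw [hd]
  have h2 := Real.two_mul_sin_mul_sin (((m:ℝ)+1)*x) (((j:ℝ)+1)*x)
  have hc : Real.cos (((m:ℝ) - j)*x) = Real.cos ((((m:ℝ)+1)*x) - (((j:ℝ)+1)*x)) := by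
    ring_nf
  rw [hc]
  ring_nf at h2 ⊢
  linarith

/-- The spherically symmetric eigenfunctions `e_j(x) = sin((j+1)x)/sin x` on `(0,π)`. -/
noncomputable def sphEig (j : ℕ) (x : ℝ) : ℝ := Real.sin (((j : ℝ) + 1) * x) / Real.sin x

/-- Everywhere-valid product formula for `e_m · e_j · sin`. -/
lemma aux_integrand_eq (m j : ℕ) (hjm : j ≤ m) (x : ℝ) :
    sphEig m x * sphEig j x * Real.sin x
      = ∑ ℓ ∈ Finset.range (j+1), Real.sin ((((m - j + 2*ℓ : ℕ) : ℝ) + 1) * x) := by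
  by_cases hs : Real.sin x = 0
  · rw [hs, mul_zero]
    symm
    apply Finset.sum_eq_zero
    intro ℓ _
    obtain ⟨k, hk⟩ := Real.sin_eq_zero_iff.mp hs
    rw [← hk]
    have : ((((m - j + 2*ℓ : ℕ) : ℝ)) + 1) * ((k:ℝ) * Real.pi)
        = (((((m - j + 2*ℓ : ℕ) : ℤ) + 1) * k : ℤ) : ℝ) * Real.pi := by push_cast; ring
    rw [this, Real.sin_int_mul_pi]
  · unfold sphEig
    have h := aux_prod_eq m j hjm x
    rw [div_mul_div_comm, h]
    rw [div_mul_eq_mul_div, div_eq_iff (mul_ne_zero hs hs)]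
    ring

lemma aux_stmt6_le (m j : ℕ) (hjm : j ≤ m) :
    (2 / Real.pi) * ∫ x in (0:ℝ)..Real.pi,
        (sphEig m x) ^ 2 * (sphEig j x) ^ 2 * Real.sin x ^ 2 = (j:ℝ) + 1 := by
  have key : ∀ x : ℝ, (sphEig m x) ^ 2 * (sphEig j x) ^ 2 * Real.sin x ^ 2
      = ∑ ℓ ∈ Finset.range (j+1), ∑ ℓ' ∈ Finset.range (j+1),
          Real.sin ((((m - j + 2*ℓ : ℕ) : ℝ) + 1) * x) *
          Real.sin ((((m - j + 2*ℓ' : ℕ) : ℝ) + 1) * x) := by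
    intro x
    rw [← Finset.sum_mul_sum]
    rw [← aux_integrand_eq m j hjm x]
    ring
  rw [intervalIntegral.integral_congr (g := fun x =>
      ∑ ℓ ∈ Finset.range (j+1), ∑ ℓ' ∈ Finset.range (j+1),
        Real.sin ((((m - j + 2*ℓ : ℕ) : ℝ) + 1) * x) *
        Real.sin ((((m - j + 2*ℓ' : ℕ) : ℝ) + 1) * x)) (fun x _ => key x)]
  rw [intervalIntegral.integral_finset_sum (fun i _ => by
    apply Continuous.intervalIntegrable
    apply continuous_finset_sum
    intro i' _
    fun_prop)]
  have : ∀ ℓ ∈ Finset.range (j+1),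
      (∫ x in (0:ℝ)..Real.pi, ∑ ℓ' ∈ Finset.range (j+1),
        Real.sin ((((m - j + 2*ℓ : ℕ) : ℝ) + 1) * x) *
        Real.sin ((((m - j + 2*ℓ' : ℕ) : ℝ) + 1) * x)) = Real.pi / 2 := by
    intro ℓ hℓ
    rw [intervalIntegral.integral_finset_sum (fun i _ => by
      apply Continuous.intervalIntegrable; fun_prop)]
    have hval : ∀ ℓ' ∈ Finset.range (j+1),
        (∫ x in (0:ℝ)..Real.pi,
          Real.sin ((((m - j + 2*ℓ : ℕ) : ℝ) + 1) * x) *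
          Real.sin ((((m - j + 2*ℓ' : ℕ) : ℝ) + 1) * x))
          = if ℓ = ℓ' then Real.pi / 2 else 0 := by
      intro ℓ' _
      rw [aux_sin_orth (m - j + 2*ℓ) (m - j + 2*ℓ')]
      congr 1
      simp only [eq_iff_iff]
      omega
    rw [Finset.sum_congr rfl hval, Finset.sum_ite_eq _ ℓ _, if_pos hℓ]
  rw [Finset.sum_congr rfl this, Finset.sum_const, Finset.card_range]
  have hpi : Real.pi ≠ 0 := Real.pi_ne_zero
  field_simp
  ring

/-- `⟨e_m² e_j, e_j⟩ = ω_{min(j,m)} = min(j,m)+1`. -/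
theorem stmt6 (m j : ℕ) :
    (2 / Real.pi) * ∫ x in (0:ℝ)..Real.pi,
        (sphEig m x) ^ 2 * (sphEig j x) ^ 2 * Real.sin x ^ 2 =
      (min j m : ℝ) + 1 := by
  rcases le_total j m with h | h
  · rw [min_eq_left (by exact_mod_cast h : (j:ℝ) ≤ (m:ℝ))]
    exact aux_stmt6_le m j h
  · rw [min_eq_right (by exact_mod_cast h : (m:ℝ) ≤ (j:ℝ))]
    have := aux_stmt6_le j m h
    rw [← this]
    congr 1
    apply intervalIntegral.integral_congr
    intro x _
    ring
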